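/- Let E, B : ℝ × ℝ³ → ℝ³ be smooth vector fields on all of space-time satisfying Faraday's law: curl E + ∂_t B = 0 and div B = 0 everywhere. Then there exist a smooth vector field A : ℝ × ℝ³ → ℝ³ and a smooth scalar field φ : ℝ × ℝ³ → ℝ such that B = curl A and E = −∇φ − ∂_t A. (Converse direction of the paper's Theorem on the Faraday 2-form: on the simply connected space ℝ⁴, the closed Faraday 2-form F = E∧dt + B is exact, F = dA.) -/

import Mathlib

open scoped BigOperators

noncomputable section

/-- Points of space-time: time paired with a spatial point. -/
abbrev SpaceTime : Type := ℝ × (Fin 3 → ℝ)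

/-- Spatial partial derivative in coordinate direction `j`. -/
def pd (j : Fin 3) (f : (Fin 3 → ℝ) → ℝ) (x : Fin 3 → ℝ) : ℝ :=
  fderiv ℝ f x (Pi.single j 1)

/-- Spatial divergence of a time-dependent vector field. -/
def div3 (F : SpaceTime → (Fin 3 → ℝ)) (t : ℝ) (x : Fin 3 → ℝ) : ℝ :=
  ∑ j : Fin 3, pd j (fun y => F (t, y) j) x

/-- `j`-th component of the spatial curl of a time-dependent vector field. -/
def curl3 (F : SpaceTime → (Fin 3 → ℝ)) (t : ℝ) (x : Fin 3 → ℝ) (j : Fin 3) : ℝ :=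
  pd (j + 1) (fun y => F (t, y) (j + 2)) x - pd (j + 2) (fun y => F (t, y) (j + 1)) x

/-- `j`-th component of the spatial gradient of a time-dependent scalar field. -/
def grad3 (f : SpaceTime → ℝ) (t : ℝ) (x : Fin 3 → ℝ) (j : Fin 3) : ℝ :=
  pd j (fun y => f (t, y)) x

/-- Time derivative of a time-dependent scalar field. -/
def dt1 (f : SpaceTime → ℝ) (t : ℝ) (x : Fin 3 → ℝ) : ℝ :=
  deriv (fun s => f (s, x)) t

/-- Second time derivative of a time-dependent scalar field. -/
def dt2 (f : SpaceTime → ℝ) (t : ℝ) (x : Fin 3 → ℝ) : ℝ :=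
  deriv (fun s => dt1 f s x) t

/-- Spatial Laplacian of a time-dependent scalar field. -/
def lap3 (f : SpaceTime → ℝ) (t : ℝ) (x : Fin 3 → ℝ) : ℝ :=
  ∑ j : Fin 3, pd j (fun y => pd j (fun z => f (t, z)) y) x


namespace Faraday

open scoped BigOperators Topology Interval ContDiff
open MeasureTheory ContinuousLinearMap


/-- primitive in the auxiliary last variable -/
def prim (g : SpaceTime × ℝ → ℝ) (q : SpaceTime × ℝ) : ℝ :=
  ∫ s in (0:ℝ)..q.2, g (q.1, s)

/-- partial derivative of `g` in the `SpaceTime` directions, as a CLM-valued map -/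
def pder (g : SpaceTime × ℝ → ℝ) (q : SpaceTime × ℝ) : SpaceTime →L[ℝ] ℝ :=
  (fderiv ℝ g q).comp (ContinuousLinearMap.inl ℝ SpaceTime ℝ)

/-- candidate derivative of `prim g` -/
def primL (g : SpaceTime × ℝ → ℝ) (q : SpaceTime × ℝ) : SpaceTime × ℝ →L[ℝ] ℝ :=
  ((∫ s in (0:ℝ)..q.2, pder g (q.1, s)).comp
    (ContinuousLinearMap.fst ℝ SpaceTime ℝ)) + g q • ContinuousLinearMap.snd ℝ SpaceTime ℝ

theorem pder_continuous {g : SpaceTime × ℝ → ℝ} (hg : ContDiff ℝ (⊤ : ℕ∞) g) :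
    Continuous (pder g) := by
  have h1 : Continuous (fderiv ℝ g) := (contDiff_infty_iff_fderiv.mp hg).2.continuous
  exact (((ContinuousLinearMap.compL ℝ SpaceTime (SpaceTime × ℝ) ℝ).flip
    (ContinuousLinearMap.inl ℝ SpaceTime ℝ)).continuous).comp h1

theorem prim_hasFDerivAt {g : SpaceTime × ℝ → ℝ} (hg : ContDiff ℝ (⊤ : ℕ∞) g)
    (q₀ : SpaceTime × ℝ) : HasFDerivAt (prim g) (primL g q₀) q₀ := by
  obtain ⟨x₀, y₀⟩ := q₀
  have hcont : Continuous g := hg.continuous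
  have hint : ∀ (x : SpaceTime) (a b : ℝ), IntervalIntegrable (fun s => g (x, s)) volume a b :=
    fun x a b => (hcont.comp (continuous_const.prodMk continuous_id)).intervalIntegrable a b
  have hsplit : prim g = fun q : SpaceTime × ℝ =>
      (∫ s in (0:ℝ)..y₀, g (q.1, s)) + ∫ s in y₀..q.2, g (q.1, s) := by
    funext q
    rw [prim, ← intervalIntegral.integral_add_adjacent_intervals (hint q.1 0 y₀) (hint q.1 y₀ q.2)]
  rw [hsplit, show primL g (x₀, y₀) = ((∫ s in (0:ℝ)..y₀, pder g ((x₀, y₀).1, s)).comp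
      (ContinuousLinearMap.fst ℝ SpaceTime ℝ)) + g (x₀, y₀) • ContinuousLinearMap.snd ℝ SpaceTime ℝ
    from rfl]
  refine HasFDerivAt.add ?_ ?_
  · -- differentiation under the integral sign, fixed endpoints
    have HA : HasFDerivAt (fun x : SpaceTime => ∫ s in (0:ℝ)..y₀, g (x, s))
        (∫ s in (0:ℝ)..y₀, pder g (x₀, s)) x₀ := by
      obtain ⟨C, hC⟩ : ∃ C, ∀ q ∈ (Metric.closedBall x₀ 1 ×ˢ Set.uIcc (0:ℝ) y₀), ‖pder g q‖ ≤ C := by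
        have hK : IsCompact (Metric.closedBall x₀ 1 ×ˢ Set.uIcc (0:ℝ) y₀) :=
          (isCompact_closedBall x₀ 1).prod isCompact_uIcc
        exact hK.exists_bound_of_continuousOn (pder_continuous hg).continuousOn
      apply intervalIntegral.hasFDerivAt_integral_of_dominated_of_fderiv_le
        (F := fun x s => g (x, s)) (F' := fun x s => pder g (x, s)) (bound := fun _ => C)
        (Metric.ball_mem_nhds x₀ one_pos)
      · exact Filter.Eventually.of_forall fun x =>
          ((hcont.comp (continuous_const.prodMk continuous_id)).aestronglyMeasurable)
      · exact hint x₀ 0 y₀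
      · exact ((pder_continuous hg).comp
          (continuous_const.prodMk continuous_id)).aestronglyMeasurable
      · refine Filter.Eventually.of_forall fun s hs x hx => hC (x, s) ?_
        exact ⟨Metric.ball_subset_closedBall hx, Set.uIoc_subset_uIcc hs⟩
      · exact intervalIntegrable_const
      · refine Filter.Eventually.of_forall fun s hs x hx => ?_
        exact ((hg.differentiable (by simp)) (x, s)).hasFDerivAt.comp x
          (hasFDerivAt_prodMk_left x s)
    exact HA.comp (x₀, y₀) (hasFDerivAt_fst (𝕜 := ℝ) (p := (x₀, y₀)))
  · -- the moving-endpoint part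
    refine HasFDerivAt.of_isLittleO ?_
    rw [Asymptotics.isLittleO_iff]
    intro c hc
    obtain ⟨δ, hδ, hδc⟩ := Metric.continuousAt_iff.1 hcont.continuousAt c hc
    filter_upwards [Metric.ball_mem_nhds (x₀, y₀) hδ] with q hq
    have habs : ∀ s ∈ Set.uIoc y₀ q.2, |s - y₀| ≤ |q.2 - y₀| := by
      intro s hs
      rw [Set.mem_uIoc] at hs
      have h1 := le_abs_self (q.2 - y₀)
      have h2 := neg_abs_le (q.2 - y₀)
      rcases hs with ⟨ha, hb⟩ | ⟨ha, hb⟩ <;>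
        · rw [abs_le]; constructor <;> linarith
    have hkey : ∀ s ∈ Set.uIoc y₀ q.2, ‖g (q.1, s) - g (x₀, y₀)‖ ≤ c := by
      intro s hs
      have hq' : dist q (x₀, y₀) < δ := Metric.mem_ball.1 hq
      have hd : dist (q.1, s) (x₀, y₀) < δ := by
        rw [Prod.dist_eq]
        rw [Prod.dist_eq] at hq'
        have hq2 := hq'
        apply max_lt
        · exact lt_of_le_of_lt (le_max_left _ _) hq2
        · have h3 : dist s y₀ ≤ dist q.2 y₀ := by
            rw [Real.dist_eq, Real.dist_eq]; exact habs s hs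
          exact lt_of_le_of_lt (h3.trans (le_max_right _ _)) hq2
      exact (le_of_lt (hδc hd))
    have heq : (∫ s in y₀..q.2, g (q.1, s)) - (∫ s in y₀..y₀, g ((x₀,y₀).1, s))
        - (g (x₀, y₀) • ContinuousLinearMap.snd ℝ SpaceTime ℝ) (q - (x₀, y₀))
        = ∫ s in y₀..q.2, (g (q.1, s) - g (x₀, y₀)) := by
      rw [intervalIntegral.integral_same,
        intervalIntegral.integral_sub (hint q.1 y₀ q.2) intervalIntegrable_const,
        intervalIntegral.integral_const]
      simp [smul_eq_mul]
      ring
    calc ‖(∫ s in y₀..q.2, g (q.1, s)) - (∫ s in y₀..y₀, g ((x₀,y₀).1, s))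
        - (g (x₀, y₀) • ContinuousLinearMap.snd ℝ SpaceTime ℝ) (q - (x₀, y₀))‖
        = ‖∫ s in y₀..q.2, (g (q.1, s) - g (x₀, y₀))‖ := by rw [heq]
      _ ≤ c * |q.2 - y₀| := intervalIntegral.norm_integral_le_of_norm_le_const hkey
      _ ≤ c * ‖q - (x₀, y₀)‖ := by
          apply mul_le_mul_of_nonneg_left _ hc.le
          calc |q.2 - y₀| = ‖(q - (x₀, y₀)).2‖ := rfl
            _ ≤ ‖q - (x₀, y₀)‖ := norm_snd_le _

theorem primL_apply {g : SpaceTime × ℝ → ℝ} (hg : ContDiff ℝ (⊤ : ℕ∞) g)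
    (q : SpaceTime × ℝ) (v : SpaceTime × ℝ) :
    primL g q v = (∫ s in (0:ℝ)..q.2, fderiv ℝ g (q.1, s) (v.1, 0)) + v.2 * g q := by
  have hφ : IntervalIntegrable (fun s => pder g (q.1, s)) volume 0 q.2 :=
    ((pder_continuous hg).comp (continuous_const.prodMk continuous_id)).intervalIntegrable _ _
  rw [primL, ContinuousLinearMap.add_apply, ContinuousLinearMap.comp_apply,
    ContinuousLinearMap.intervalIntegral_apply hφ]
  simp [pder, smul_eq_mul]
  ring


theorem prim_contDiff (n : ℕ) : ∀ (g : SpaceTime × ℝ → ℝ), ContDiff ℝ (⊤ : ℕ∞) g →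
    ContDiff ℝ (n : ℕ) (prim g) := by
  induction n with
  | zero =>
    intro g hg
    rw [show ((0 : ℕ) : WithTop ℕ∞) = 0 from rfl, contDiff_zero]
    have h : Continuous (Function.uncurry fun (x : SpaceTime) (s : ℝ) => g (x, s)) := by
      exact hg.continuous
    exact intervalIntegral.continuous_parametric_primitive_of_continuous h
  | succ n ih =>
    intro g hg
    have key : ∀ q, HasFDerivAt (prim g) (primL g q) q := prim_hasFDerivAt hg
    rw [show ((n + 1 : ℕ) : WithTop ℕ∞) = (n : ℕ) + 1 from by push_cast; rfl,
      contDiff_succ_iff_fderiv_apply]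
    refine ⟨fun q => (key q).differentiableAt, by simp, ?_⟩
    intro v
    have hfd : (fun q => fderiv ℝ (prim g) q v) = fun q =>
        prim (fun u => fderiv ℝ g u (v.1, 0)) q + v.2 * g q := by
      funext q
      rw [(key q).fderiv, primL_apply hg]
      rfl
    rw [hfd]
    have hg' : ContDiff ℝ (⊤ : ℕ∞) (fun u : SpaceTime × ℝ => fderiv ℝ g u (v.1, 0)) :=
      (contDiff_infty_iff_fderiv.mp hg).2.clm_apply contDiff_const
    exact (ih _ hg').add (contDiff_const.mul (hg.of_le (mod_cast le_top)))

theorem prim_contDiff_top {g : SpaceTime × ℝ → ℝ} (hg : ContDiff ℝ (⊤ : ℕ∞) g) :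
    ContDiff ℝ (⊤ : ℕ∞) (prim g) := by
  rw [show (((⊤ : ℕ∞) : WithTop ℕ∞)) = ∞ from rfl, contDiff_infty]
  exact fun n => prim_contDiff n g hg


/-! ### Coordinate primitives -/

/-- the continuous linear map `((t,x),s) ↦ (t, update x j s)` -/
def mJ (j : Fin 3) : (SpaceTime × ℝ) →L[ℝ] SpaceTime :=
  ((ContinuousLinearMap.fst ℝ ℝ (Fin 3 → ℝ)).comp (ContinuousLinearMap.fst ℝ SpaceTime ℝ)).prod
    (ContinuousLinearMap.pi (fun i => if i = j then ContinuousLinearMap.snd ℝ SpaceTime ℝ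
      else (ContinuousLinearMap.proj i).comp ((ContinuousLinearMap.snd ℝ ℝ (Fin 3 → ℝ)).comp
        (ContinuousLinearMap.fst ℝ SpaceTime ℝ))))

theorem mJ_apply (j : Fin 3) (p : SpaceTime) (s : ℝ) :
    mJ j (p, s) = (p.1, Function.update p.2 j s) := by
  refine Prod.ext rfl ?_
  funext i
  by_cases h : i = j <;>
    simp [mJ, h, Function.update_apply]

/-- inclusion `p ↦ (p, p.2 j)` as a continuous linear map -/
def ιL (j : Fin 3) : SpaceTime →L[ℝ] SpaceTime × ℝ :=
  (ContinuousLinearMap.id ℝ SpaceTime).prod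
    ((ContinuousLinearMap.proj j).comp (ContinuousLinearMap.snd ℝ ℝ (Fin 3 → ℝ)))

/-- primitive of `f` in the `j`-th spatial coordinate, from `0` -/
def Pc (j : Fin 3) (f : SpaceTime → ℝ) : SpaceTime → ℝ :=
  fun p => prim (fun q => f (mJ j q)) (p, p.2 j)

theorem Pc_apply (j : Fin 3) (f : SpaceTime → ℝ) (t : ℝ) (x : Fin 3 → ℝ) :
    Pc j f (t, x) = ∫ s in (0:ℝ)..x j, f (t, Function.update x j s) := by
  simp only [Pc, prim, mJ_apply]

theorem Pc_contDiff (j : Fin 3) {f : SpaceTime → ℝ} (hf : ContDiff ℝ (⊤ : ℕ∞) f) :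
    ContDiff ℝ (⊤ : ℕ∞) (Pc j f) := by
  have h1 : ContDiff ℝ (⊤ : ℕ∞) (fun q : SpaceTime × ℝ => f (mJ j q)) :=
    hf.comp (mJ j).contDiff
  exact (prim_contDiff_top h1).comp ((ιL j).contDiff)

theorem Pc_hasFDerivAt (j : Fin 3) {f : SpaceTime → ℝ} (hf : ContDiff ℝ (⊤ : ℕ∞) f)
    (p : SpaceTime) :
    HasFDerivAt (Pc j f)
      ((primL (fun q => f (mJ j q)) (p, p.2 j)).comp (ιL j)) p := by
  have h1 : ContDiff ℝ (⊤ : ℕ∞) (fun q : SpaceTime × ℝ => f (mJ j q)) :=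
    hf.comp (mJ j).contDiff
  exact (prim_hasFDerivAt h1 (p, p.2 j)).comp p ((ιL j).hasFDerivAt)

theorem fderiv_Pc (j : Fin 3) {f : SpaceTime → ℝ} (hf : ContDiff ℝ (⊤ : ℕ∞) f)
    (p : SpaceTime) (v : SpaceTime) :
    fderiv ℝ (Pc j f) p v =
      (∫ s in (0:ℝ)..p.2 j,
        fderiv ℝ f (p.1, Function.update p.2 j s) (v.1, Function.update v.2 j 0))
      + v.2 j * f p := by
  have h1 : ContDiff ℝ (⊤ : ℕ∞) (fun q : SpaceTime × ℝ => f (mJ j q)) :=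
    hf.comp (mJ j).contDiff
  rw [(Pc_hasFDerivAt j hf p).fderiv, ContinuousLinearMap.comp_apply, primL_apply h1]
  have hv : ιL j v = (v, v.2 j) := rfl
  rw [hv]
  congr 1
  · apply intervalIntegral.integral_congr
    intro s _
    have hcomp : fderiv ℝ (fun q : SpaceTime × ℝ => f (mJ j q)) (p, s) =
        (fderiv ℝ f (mJ j (p, s))).comp (mJ j) := by
      rw [show (fun q : SpaceTime × ℝ => f (mJ j q)) = f ∘ (mJ j) from rfl]
      rw [fderiv_comp _ ((hf.differentiable (by simp)) _)
        ((mJ j).differentiable _), (mJ j).fderiv]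
    beta_reduce
    rw [hcomp, ContinuousLinearMap.comp_apply, mJ_apply, mJ_apply]
  · rw [mJ_apply]
    simp


/-! ### Directional derivatives -/

/-- directional derivative -/
def Dv (v : SpaceTime) (f : SpaceTime → ℝ) : SpaceTime → ℝ := fun p => fderiv ℝ f p v

/-- time direction -/
def et : SpaceTime := (1, 0)

/-- spatial coordinate directions -/
def ex (j : Fin 3) : SpaceTime := (0, Pi.single j 1)

theorem Dv_contDiff {f : SpaceTime → ℝ} (hf : ContDiff ℝ (⊤ : ℕ∞) f) (v : SpaceTime) :
    ContDiff ℝ (⊤ : ℕ∞) (Dv v f) :=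
  (contDiff_infty_iff_fderiv.mp hf).2.clm_apply contDiff_const

theorem Dv_comm {f : SpaceTime → ℝ} (hf : ContDiff ℝ (⊤ : ℕ∞) f) (v w : SpaceTime) :
    Dv v (Dv w f) = Dv w (Dv v f) := by
  funext p
  have hd : ∀ y, HasFDerivAt f (fderiv ℝ f y) y := fun y =>
    ((hf.differentiable (by simp)) y).hasFDerivAt
  have hd2 : HasFDerivAt (fderiv ℝ f) (fderiv ℝ (fderiv ℝ f) p) p :=
    (((contDiff_infty_iff_fderiv.mp hf).2.differentiable (by simp)) p).hasFDerivAt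
  have hsymm := second_derivative_symmetric hd hd2 v w
  have key : ∀ u : SpaceTime, fderiv ℝ (fun q => fderiv ℝ f q u) p =
      (ContinuousLinearMap.apply ℝ ℝ u).comp (fderiv ℝ (fderiv ℝ f) p) := by
    intro u
    exact (((ContinuousLinearMap.apply ℝ ℝ u).hasFDerivAt).comp p hd2).fderiv
  show fderiv ℝ (fun q => fderiv ℝ f q w) p v = fderiv ℝ (fun q => fderiv ℝ f q v) p w
  rw [key w, key v]
  simpa using hsymm

theorem Dv_add {f g : SpaceTime → ℝ} (hf : ContDiff ℝ (⊤ : ℕ∞) f) (hg : ContDiff ℝ (⊤ : ℕ∞) g)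
    (v : SpaceTime) : Dv v (fun p => f p + g p) = fun p => Dv v f p + Dv v g p := by
  funext p
  simp only [Dv]
  rw [fderiv_fun_add ((hf.differentiable (by simp)) p)
    ((hg.differentiable (by simp)) p)]
  rfl

theorem Dv_neg {f : SpaceTime → ℝ} (v : SpaceTime) :
    Dv v (fun p => -f p) = fun p => -Dv v f p := by
  funext p
  simp only [Dv]
  rw [fderiv_fun_neg]
  rfl

theorem Dv_sub {f g : SpaceTime → ℝ} (hf : ContDiff ℝ (⊤ : ℕ∞) f) (hg : ContDiff ℝ (⊤ : ℕ∞) g)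
    (v : SpaceTime) : Dv v (fun p => f p - g p) = fun p => Dv v f p - Dv v g p := by
  funext p
  simp only [Dv]
  rw [fderiv_fun_sub ((hf.differentiable (by simp)) p)
    ((hg.differentiable (by simp)) p)]
  rfl

/-! ### bridges between `pd`/`dt1` and `Dv` -/

theorem pd_eq_Dv {f : SpaceTime → ℝ} (hf : ContDiff ℝ (⊤ : ℕ∞) f) (j : Fin 3)
    (t : ℝ) (x : Fin 3 → ℝ) : pd j (fun y => f (t, y)) x = Dv (ex j) f (t, x) := by
  have hinc : HasFDerivAt (fun y : Fin 3 → ℝ => (t, y))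
      (ContinuousLinearMap.inr ℝ ℝ (Fin 3 → ℝ)) x := hasFDerivAt_prodMk_right t x
  have hcomp : HasFDerivAt (fun y => f (t, y))
      ((fderiv ℝ f (t, x)).comp (ContinuousLinearMap.inr ℝ ℝ (Fin 3 → ℝ))) x :=
    (((hf.differentiable (by simp)) (t, x)).hasFDerivAt).comp x hinc
  rw [pd, hcomp.fderiv]
  rfl

theorem dt1_eq_Dv {f : SpaceTime → ℝ} (hf : ContDiff ℝ (⊤ : ℕ∞) f)
    (t : ℝ) (x : Fin 3 → ℝ) : dt1 f t x = Dv et f (t, x) := by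
  have hinc : HasDerivAt (fun s : ℝ => (s, x) : ℝ → SpaceTime) ((1 : ℝ), (0 : Fin 3 → ℝ)) t :=
    (hasDerivAt_id t).prodMk (hasDerivAt_const t x)
  have hcomp : HasDerivAt (fun s => f (s, x)) (fderiv ℝ f (t, x) ((1 : ℝ), (0 : Fin 3 → ℝ))) t :=
    (((hf.differentiable (by simp)) (t, x)).hasFDerivAt).comp_hasDerivAt t hinc
  rw [dt1, hcomp.deriv]
  rfl


/-! ### update helper lemmas -/

theorem upd_single_self (j : Fin 3) :
    Function.update (Pi.single j 1 : Fin 3 → ℝ) j (0:ℝ) = 0 := by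
  funext i
  by_cases h : i = j
  · subst h; simp
  · simp [Function.update_apply, h, Pi.single_eq_of_ne h]

theorem upd_single_ne {i j : Fin 3} (h : i ≠ j) :
    Function.update (Pi.single i 1 : Fin 3 → ℝ) j (0:ℝ) = Pi.single i 1 := by
  funext k
  by_cases hk : k = j
  · subst hk; simp [Function.update_apply, Pi.single_eq_of_ne (Ne.symm h)]
  · simp [Function.update_apply, hk]

theorem upd_zero (j : Fin 3) : Function.update (0 : Fin 3 → ℝ) j (0:ℝ) = 0 := by
  funext k
  by_cases hk : k = j <;> simp [Function.update_apply, hk]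

theorem Pc_apply' (j : Fin 3) (f : SpaceTime → ℝ) (p : SpaceTime) :
    Pc j f p = ∫ s in (0:ℝ)..p.2 j, f (p.1, Function.update p.2 j s) := by
  simp only [Pc, prim, mJ_apply]

/-! ### derivatives of coordinate primitives -/

theorem Dv_Pc_self (j : Fin 3) {f : SpaceTime → ℝ} (hf : ContDiff ℝ (⊤ : ℕ∞) f) :
    Dv (ex j) (Pc j f) = f := by
  funext p
  show fderiv ℝ (Pc j f) p (ex j) = f p
  rw [fderiv_Pc j hf p (ex j)]
  have h1 : ((ex j).1, Function.update (ex j).2 j 0) = (0 : SpaceTime) := by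
    rw [show (ex j).2 = Pi.single j (1:ℝ) from rfl, upd_single_self]
    rfl
  have h2 : (ex j).2 j = 1 := Pi.single_eq_same j 1
  rw [h2, one_mul]
  simp only [h1, map_zero, intervalIntegral.integral_zero, zero_add]

theorem Dv_Pc_ne {i j : Fin 3} (h : i ≠ j) {f : SpaceTime → ℝ}
    (hf : ContDiff ℝ (⊤ : ℕ∞) f) :
    Dv (ex i) (Pc j f) = Pc j (Dv (ex i) f) := by
  funext p
  show fderiv ℝ (Pc j f) p (ex i) = Pc j (Dv (ex i) f) p
  rw [fderiv_Pc j hf p (ex i), Pc_apply']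
  have h1 : ((ex i).1, Function.update (ex i).2 j 0) = ex i := by
    rw [show (ex i).2 = Pi.single i (1:ℝ) from rfl, upd_single_ne h]
    rfl
  have h2 : (ex i).2 j = 0 := Pi.single_eq_of_ne (Ne.symm h) 1
  rw [h1, h2, zero_mul, add_zero]
  rfl

theorem Dv_Pc_time (j : Fin 3) {f : SpaceTime → ℝ} (hf : ContDiff ℝ (⊤ : ℕ∞) f) :
    Dv et (Pc j f) = Pc j (Dv et f) := by
  funext p
  show fderiv ℝ (Pc j f) p et = Pc j (Dv et f) p
  rw [fderiv_Pc j hf p et, Pc_apply']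
  have h1 : (et.1, Function.update et.2 j 0) = et := by
    rw [show et.2 = (0 : Fin 3 → ℝ) from rfl, upd_zero]
    rfl
  have h2 : et.2 j = 0 := rfl
  rw [h1, h2, zero_mul, add_zero]
  rfl

/-- fundamental theorem of calculus for the coordinate primitive -/
theorem Pc_FTC (j : Fin 3) {f : SpaceTime → ℝ} (hf : ContDiff ℝ (⊤ : ℕ∞) f) (p : SpaceTime) :
    Pc j (Dv (ex j) f) p = f p - f (p.1, Function.update p.2 j 0) := by
  rw [Pc_apply']
  have hc : ∀ s : ℝ, HasDerivAt (fun s : ℝ => ((p.1, Function.update p.2 j s) : SpaceTime))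
      (((0:ℝ), Pi.single j (1:ℝ)) : SpaceTime) s := by
    intro s
    have heq : (fun s : ℝ => ((p.1, Function.update p.2 j s) : SpaceTime)) =
        fun s : ℝ => ((p.1, Function.update p.2 j 0) : SpaceTime)
          + s • (((0:ℝ), Pi.single j (1:ℝ)) : SpaceTime) := by
      funext s
      refine Prod.ext (by simp) ?_
      funext i
      by_cases hk : i = j <;>
        simp [Function.update_apply, hk, Pi.single_eq_of_ne, Prod.smul_def]
    rw [heq]
    simpa using ((hasDerivAt_id s).smul_const
      (((0:ℝ), Pi.single j (1:ℝ)) : SpaceTime)).const_add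
      ((p.1, Function.update p.2 j 0) : SpaceTime)
  have hderiv : ∀ s ∈ Set.uIcc (0:ℝ) (p.2 j),
      HasDerivAt (fun s : ℝ => f (p.1, Function.update p.2 j s))
        (Dv (ex j) f (p.1, Function.update p.2 j s)) s := by
    intro s _
    exact (((hf.differentiable (by simp)) _).hasFDerivAt).comp_hasDerivAt s (hc s)
  have hint : IntervalIntegrable (fun s => Dv (ex j) f (p.1, Function.update p.2 j s))
      MeasureTheory.volume 0 (p.2 j) := by
    apply Continuous.intervalIntegrable
    have : Continuous (fun s : ℝ => ((p.1, Function.update p.2 j s) : SpaceTime)) :=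
      ((mJ j).continuous.comp (continuous_const.prodMk continuous_id)).congr
        (fun s => (mJ_apply j p s))
    exact (Dv_contDiff hf (ex j)).continuous.comp this
  rw [intervalIntegral.integral_eq_sub_of_hasDerivAt hderiv hint]
  rw [Function.update_eq_self]

/-! ### derivatives through a frozen coordinate -/

theorem Dv_frozen (j : Fin 3) (c : ℝ) {f : SpaceTime → ℝ} (hf : ContDiff ℝ (⊤ : ℕ∞) f)
    (v : SpaceTime) :
    Dv v (fun p => f (p.1, Function.update p.2 j c)) =
      fun p => Dv (v.1, Function.update v.2 j 0) f (p.1, Function.update p.2 j c) := by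
  have hfun : (fun p : SpaceTime => f (p.1, Function.update p.2 j c)) =
      fun p : SpaceTime => f (mJ j (p, c)) := by
    funext p; rw [mJ_apply]
  rw [hfun]
  funext p
  have hm : HasFDerivAt (fun p : SpaceTime => mJ j (p, c))
      ((mJ j).comp ((ContinuousLinearMap.id ℝ SpaceTime).prod 0)) p :=
    ((mJ j).hasFDerivAt).comp p ((hasFDerivAt_id p).prodMk (hasFDerivAt_const c p))
  have hcomp : HasFDerivAt (fun p : SpaceTime => f (mJ j (p, c)))
      ((fderiv ℝ f (mJ j (p, c))).comp
        ((mJ j).comp ((ContinuousLinearMap.id ℝ SpaceTime).prod 0))) p :=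
    (((hf.differentiable (by simp)) _).hasFDerivAt).comp p hm
  show fderiv ℝ _ p v = _
  rw [hcomp.fderiv]
  have : ((mJ j).comp ((ContinuousLinearMap.id ℝ SpaceTime).prod 0)) v = mJ j (v, 0) := rfl
  rw [ContinuousLinearMap.comp_apply, this, mJ_apply, mJ_apply]
  rfl

theorem frozen_contDiff (j : Fin 3) (c : ℝ) {f : SpaceTime → ℝ}
    (hf : ContDiff ℝ (⊤ : ℕ∞) f) :
    ContDiff ℝ (⊤ : ℕ∞) (fun p : SpaceTime => f (p.1, Function.update p.2 j c)) := by
  have hfun : (fun p : SpaceTime => f (p.1, Function.update p.2 j c)) =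
      fun p : SpaceTime => f (mJ j (p, c)) := by
    funext p; rw [mJ_apply]
  rw [hfun]
  exact hf.comp ((mJ j).contDiff.comp (contDiff_id.prodMk contDiff_const))

/-! ### arithmetic for `Pc` -/

theorem Pc_add (j : Fin 3) {f g : SpaceTime → ℝ} (hf : Continuous f) (hg : Continuous g)
    (p : SpaceTime) : Pc j (fun q => f q + g q) p = Pc j f p + Pc j g p := by
  simp only [Pc_apply']
  apply intervalIntegral.integral_add
  · exact ((hf.comp ((mJ j).continuous.comp
      ((continuous_const : Continuous fun _ : ℝ => p).prodMk continuous_id))).congr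
        (fun s => by show f (mJ j (p, s)) = _; rw [mJ_apply])).intervalIntegrable _ _
  · exact ((hg.comp ((mJ j).continuous.comp
      ((continuous_const : Continuous fun _ : ℝ => p).prodMk continuous_id))).congr
        (fun s => by show g (mJ j (p, s)) = _; rw [mJ_apply])).intervalIntegrable _ _

theorem Pc_neg (j : Fin 3) (f : SpaceTime → ℝ) (p : SpaceTime) :
    Pc j (fun q => -f q) p = -Pc j f p := by
  simp only [Pc_apply']
  exact intervalIntegral.integral_neg


theorem Dv_zero (f : SpaceTime → ℝ) : Dv (0 : SpaceTime) f = fun _ => 0 := by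
  funext p
  exact (fderiv ℝ f p).map_zero

theorem Pc_zero (j : Fin 3) : Pc j (fun _ => (0:ℝ)) = fun _ => 0 := by
  funext p
  rw [Pc_apply']
  simp

theorem Dv_frozen_same (j : Fin 3) (c : ℝ) {f : SpaceTime → ℝ}
    (hf : ContDiff ℝ (⊤ : ℕ∞) f) :
    Dv (ex j) (fun p => f (p.1, Function.update p.2 j c)) = fun _ => 0 := by
  rw [Dv_frozen j c hf (ex j)]
  have hv : (((ex j).1, Function.update (ex j).2 j 0) : SpaceTime) = 0 := by
    show (((0:ℝ), Function.update (Pi.single j 1 : Fin 3 → ℝ) j 0) : SpaceTime) = 0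
    rw [upd_single_self]
    rfl
  rw [hv, Dv_zero]

theorem Dv_frozen_ne {i j : Fin 3} (h : i ≠ j) (c : ℝ) {f : SpaceTime → ℝ}
    (hf : ContDiff ℝ (⊤ : ℕ∞) f) :
    Dv (ex i) (fun p => f (p.1, Function.update p.2 j c)) =
      fun p => Dv (ex i) f (p.1, Function.update p.2 j c) := by
  rw [Dv_frozen j c hf (ex i)]
  have hv : (((ex i).1, Function.update (ex i).2 j 0) : SpaceTime) = ex i := by
    show (((0:ℝ), Function.update (Pi.single i 1 : Fin 3 → ℝ) j 0) : SpaceTime) = ex i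
    rw [upd_single_ne h]
    rfl
  rw [hv]

theorem Dv_frozen_time (j : Fin 3) (c : ℝ) {f : SpaceTime → ℝ}
    (hf : ContDiff ℝ (⊤ : ℕ∞) f) :
    Dv et (fun p => f (p.1, Function.update p.2 j c)) =
      fun p => Dv et f (p.1, Function.update p.2 j c) := by
  rw [Dv_frozen j c hf et]
  have hv : ((et.1, Function.update et.2 j 0) : SpaceTime) = et := by
    show (((1:ℝ), Function.update (0 : Fin 3 → ℝ) j 0) : SpaceTime) = et
    rw [upd_zero]
    rfl
  rw [hv]


/-! ### the vector potential -/

section Assembly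

variable (B : SpaceTime → (Fin 3 → ℝ))

/-- `B₂` with the third coordinate frozen at `0` -/
def fz2 : SpaceTime → ℝ := fun q => B (q.1, Function.update q.2 2 0) 2

/-- the vector potential -/
def AA : SpaceTime → (Fin 3 → ℝ) :=
  fun p => ![Pc 2 (fun q => B q 1) p, Pc 0 (fz2 B) p - Pc 2 (fun q => B q 0) p, 0]

variable {B}

theorem fz2_contDiff (hB : ContDiff ℝ (⊤ : ℕ∞) B) : ContDiff ℝ (⊤ : ℕ∞) (fz2 B) :=
  frozen_contDiff 2 0 (contDiff_pi.mp hB 2)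

theorem AA_contDiff (hB : ContDiff ℝ (⊤ : ℕ∞) B) : ContDiff ℝ (⊤ : ℕ∞) (AA B) := by
  rw [contDiff_pi]
  intro i
  fin_cases i
  · exact Pc_contDiff 2 (contDiff_pi.mp hB 1)
  · exact (Pc_contDiff 0 (fz2_contDiff hB)).sub (Pc_contDiff 2 (contDiff_pi.mp hB 0))
  · exact contDiff_const

theorem AA_c0_contDiff (hB : ContDiff ℝ (⊤ : ℕ∞) B) :
    ContDiff ℝ (⊤ : ℕ∞) (fun p => AA B p 0) :=
  Pc_contDiff 2 (contDiff_pi.mp hB 1)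

theorem AA_c1_contDiff (hB : ContDiff ℝ (⊤ : ℕ∞) B) :
    ContDiff ℝ (⊤ : ℕ∞) (fun p => AA B p 1) :=
  (Pc_contDiff 0 (fz2_contDiff hB)).sub (Pc_contDiff 2 (contDiff_pi.mp hB 0))

theorem AA_c2_contDiff : ContDiff ℝ (⊤ : ℕ∞) (fun p => AA B p 2) :=
  (contDiff_const : ContDiff ℝ (⊤ : ℕ∞) (fun _ : SpaceTime => (0:ℝ)))

theorem DA_1_2 : Dv (ex 1) (fun p => AA B p 2) = fun _ => 0 := by
  show Dv (ex 1) (fun _ => (0:ℝ)) = fun _ => 0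
  funext p
  show fderiv ℝ (fun _ : SpaceTime => (0:ℝ)) p (ex 1) = 0
  rw [fderiv_fun_const]
  rfl

theorem DA_0_2 : Dv (ex 0) (fun p => AA B p 2) = fun _ => 0 := by
  show Dv (ex 0) (fun _ => (0:ℝ)) = fun _ => 0
  funext p
  show fderiv ℝ (fun _ : SpaceTime => (0:ℝ)) p (ex 0) = 0
  rw [fderiv_fun_const]
  rfl

theorem DA_2_1 (hB : ContDiff ℝ (⊤ : ℕ∞) B) :
    Dv (ex 2) (fun p => AA B p 1) = fun q => -(B q 0) := by
  show Dv (ex 2) (fun p => Pc 0 (fz2 B) p - Pc 2 (fun q => B q 0) p) = fun q => -(B q 0)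
  rw [Dv_sub (Pc_contDiff 0 (fz2_contDiff hB)) (Pc_contDiff 2 (contDiff_pi.mp hB 0))]
  rw [Dv_Pc_ne (show (2:Fin 3) ≠ 0 by decide) (fz2_contDiff hB)]
  rw [Dv_Pc_self 2 (contDiff_pi.mp hB 0)]
  have hz : Dv (ex 2) (fz2 B) = fun _ => 0 := by
    show Dv (ex 2) (fun p : SpaceTime =>
      (fun q : SpaceTime => B q 2) (p.1, Function.update p.2 2 0)) = fun _ => 0
    exact Dv_frozen_same 2 0 (contDiff_pi.mp hB 2)
  rw [hz, Pc_zero]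
  funext q
  simp

theorem DA_2_0 (hB : ContDiff ℝ (⊤ : ℕ∞) B) :
    Dv (ex 2) (fun p => AA B p 0) = fun q => B q 1 := by
  show Dv (ex 2) (Pc 2 (fun q => B q 1)) = fun q => B q 1
  rw [Dv_Pc_self 2 (contDiff_pi.mp hB 1)]

theorem DA_1_0 (hB : ContDiff ℝ (⊤ : ℕ∞) B) :
    Dv (ex 1) (fun p => AA B p 0) = Pc 2 (Dv (ex 1) (fun q => B q 1)) := by
  show Dv (ex 1) (Pc 2 (fun q => B q 1)) = _
  rw [Dv_Pc_ne (show (1:Fin 3) ≠ 2 by decide) (contDiff_pi.mp hB 1)]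

theorem DA_0_1 (hB : ContDiff ℝ (⊤ : ℕ∞) B) :
    Dv (ex 0) (fun p => AA B p 1) =
      fun q => fz2 B q - Pc 2 (Dv (ex 0) (fun q => B q 0)) q := by
  show Dv (ex 0) (fun p => Pc 0 (fz2 B) p - Pc 2 (fun q => B q 0) p) = _
  rw [Dv_sub (Pc_contDiff 0 (fz2_contDiff hB)) (Pc_contDiff 2 (contDiff_pi.mp hB 0))]
  rw [Dv_Pc_self 0 (fz2_contDiff hB)]
  rw [Dv_Pc_ne (show (0:Fin 3) ≠ 2 by decide) (contDiff_pi.mp hB 0)]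

/-- the curl of `AA B` equals `B`, given `div B = 0`, as `Dv`-identities -/
theorem curlA_0 (hB : ContDiff ℝ (⊤ : ℕ∞) B) :
    (fun q => Dv (ex 1) (fun p => AA B p 2) q - Dv (ex 2) (fun p => AA B p 1) q)
      = fun q => B q 0 := by
  rw [DA_1_2, DA_2_1 hB]
  funext q
  simp

theorem curlA_1 (hB : ContDiff ℝ (⊤ : ℕ∞) B) :
    (fun q => Dv (ex 2) (fun p => AA B p 0) q - Dv (ex 0) (fun p => AA B p 2) q)
      = fun q => B q 1 := by
  rw [DA_2_0 hB, DA_0_2]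
  funext q
  simp

theorem curlA_2 (hB : ContDiff ℝ (⊤ : ℕ∞) B)
    (hdiv : ∀ q : SpaceTime, Dv (ex 0) (fun p => B p 0) q + Dv (ex 1) (fun p => B p 1) q
      + Dv (ex 2) (fun p => B p 2) q = 0) :
    (fun q => Dv (ex 0) (fun p => AA B p 1) q - Dv (ex 1) (fun p => AA B p 0) q)
      = fun q => B q 2 := by
  rw [DA_0_1 hB, DA_1_0 hB]
  funext q
  have hc0 : Continuous (Dv (ex 0) (fun p : SpaceTime => B p 0)) :=
    (Dv_contDiff (contDiff_pi.mp hB 0) (ex 0)).continuous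
  have hc1 : Continuous (Dv (ex 1) (fun p : SpaceTime => B p 1)) :=
    (Dv_contDiff (contDiff_pi.mp hB 1) (ex 1)).continuous
  have hsum : Pc 2 (Dv (ex 0) (fun p => B p 0)) q + Pc 2 (Dv (ex 1) (fun p => B p 1)) q
      = Pc 2 (fun p => -(Dv (ex 2) (fun p : SpaceTime => B p 2) p)) q := by
    rw [← Pc_add 2 hc0 hc1]
    congr 1
    funext p
    have := hdiv p
    linarith
  have hneg : Pc 2 (fun p => -(Dv (ex 2) (fun p : SpaceTime => B p 2) p)) q
      = -Pc 2 (Dv (ex 2) (fun p : SpaceTime => B p 2)) q := Pc_neg 2 _ q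
  have hftc := Pc_FTC 2 (contDiff_pi.mp hB 2) q
  have hfz : fz2 B q = (fun p : SpaceTime => B p 2) (q.1, Function.update q.2 2 0) := rfl
  -- goal : fz2 B q - Pc 2 (Dv (ex 0) ...) q - Pc 2 (Dv (ex 1) ...) q = B q 2
  have : Pc 2 (Dv (ex 0) (fun p => B p 0)) q + Pc 2 (Dv (ex 1) (fun p => B p 1)) q
      = -(B q 2 - B (q.1, Function.update q.2 2 0) 2) := by
    rw [hsum, hneg, hftc]
  simp only [Pi.sub_apply]
  linarith [this]

end Assembly


/-! ### the scalar potential -/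

section Scalar

variable (E B : SpaceTime → (Fin 3 → ℝ))

/-- the field that should be the spatial gradient of the scalar potential -/
def VV (j : Fin 3) : SpaceTime → ℝ :=
  fun p => -E p j - Dv et (fun q => AA B q j) p

/-- `VV 0` frozen at the third coordinate -/
def h0V : SpaceTime → ℝ := fun q => VV E B 0 (q.1, Function.update q.2 2 0)

/-- `VV 1` frozen at the third coordinate -/
def g1V : SpaceTime → ℝ := fun q => VV E B 1 (q.1, Function.update q.2 2 0)

/-- `VV 0` frozen at the second and third coordinates -/
def g0V : SpaceTime → ℝ := fun q => h0V E B (q.1, Function.update q.2 1 0)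

/-- the scalar potential -/
def PhiP : SpaceTime → ℝ :=
  fun p => (Pc 2 (VV E B 2) p + Pc 1 (g1V E B) p) + Pc 0 (g0V E B) p

variable {E B}

theorem VV_contDiff (hE : ContDiff ℝ (⊤ : ℕ∞) E) (hB : ContDiff ℝ (⊤ : ℕ∞) B) (j : Fin 3) :
    ContDiff ℝ (⊤ : ℕ∞) (VV E B j) :=
  ((contDiff_pi.mp hE j).neg).sub
    (Dv_contDiff (contDiff_pi.mp (AA_contDiff hB) j) et)

theorem h0V_contDiff (hE : ContDiff ℝ (⊤ : ℕ∞) E) (hB : ContDiff ℝ (⊤ : ℕ∞) B) :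
    ContDiff ℝ (⊤ : ℕ∞) (h0V E B) :=
  frozen_contDiff 2 0 (VV_contDiff hE hB 0)

theorem g1V_contDiff (hE : ContDiff ℝ (⊤ : ℕ∞) E) (hB : ContDiff ℝ (⊤ : ℕ∞) B) :
    ContDiff ℝ (⊤ : ℕ∞) (g1V E B) :=
  frozen_contDiff 2 0 (VV_contDiff hE hB 1)

theorem g0V_contDiff (hE : ContDiff ℝ (⊤ : ℕ∞) E) (hB : ContDiff ℝ (⊤ : ℕ∞) B) :
    ContDiff ℝ (⊤ : ℕ∞) (g0V E B) :=
  frozen_contDiff 1 0 (h0V_contDiff hE hB)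

theorem PhiP_contDiff (hE : ContDiff ℝ (⊤ : ℕ∞) E) (hB : ContDiff ℝ (⊤ : ℕ∞) B) :
    ContDiff ℝ (⊤ : ℕ∞) (PhiP E B) :=
  (((Pc_contDiff 2 (VV_contDiff hE hB 2)).add (Pc_contDiff 1 (g1V_contDiff hE hB))).add
    (Pc_contDiff 0 (g0V_contDiff hE hB)))

theorem DV_V (hE : ContDiff ℝ (⊤ : ℕ∞) E) (hB : ContDiff ℝ (⊤ : ℕ∞) B) (i j : Fin 3) :
    Dv (ex i) (VV E B j) = fun q => -(Dv (ex i) (fun p => E p j) q)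
      - Dv et (Dv (ex i) (fun p => AA B p j)) q := by
  show Dv (ex i) (fun p => -E p j - Dv et (fun q => AA B q j) p) = _
  rw [Dv_sub ((contDiff_pi.mp hE j).neg)
    (Dv_contDiff (contDiff_pi.mp (AA_contDiff hB) j) et), Dv_neg,
    Dv_comm (contDiff_pi.mp (AA_contDiff hB) j) (ex i) et]

theorem c0V (hE : ContDiff ℝ (⊤ : ℕ∞) E) (hB : ContDiff ℝ (⊤ : ℕ∞) B)
    (hFar0 : ∀ q : SpaceTime, Dv (ex 1) (fun p => E p 2) q - Dv (ex 2) (fun p => E p 1) q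
      + Dv et (fun p => B p 0) q = 0) :
    Dv (ex 1) (VV E B 2) = Dv (ex 2) (VV E B 1) := by
  rw [DV_V hE hB 1 2, DV_V hE hB 2 1]
  have hAs : ∀ j : Fin 3, ContDiff ℝ (⊤ : ℕ∞) (fun p => AA B p j) :=
    contDiff_pi.mp (AA_contDiff hB)
  have hDet : Dv et (fun q => Dv (ex 1) (fun p => AA B p 2) q
      - Dv (ex 2) (fun p => AA B p 1) q) = Dv et (fun q => B q 0) := by
    rw [curlA_0 hB]
  rw [Dv_sub (Dv_contDiff (hAs 2) (ex 1)) (Dv_contDiff (hAs 1) (ex 2))] at hDet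
  funext q
  have h1 := congrFun hDet q
  have h2 := hFar0 q
  linarith

theorem c1V (hE : ContDiff ℝ (⊤ : ℕ∞) E) (hB : ContDiff ℝ (⊤ : ℕ∞) B)
    (hFar1 : ∀ q : SpaceTime, Dv (ex 2) (fun p => E p 0) q - Dv (ex 0) (fun p => E p 2) q
      + Dv et (fun p => B p 1) q = 0) :
    Dv (ex 2) (VV E B 0) = Dv (ex 0) (VV E B 2) := by
  rw [DV_V hE hB 2 0, DV_V hE hB 0 2]
  have hAs : ∀ j : Fin 3, ContDiff ℝ (⊤ : ℕ∞) (fun p => AA B p j) :=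
    contDiff_pi.mp (AA_contDiff hB)
  have hDet : Dv et (fun q => Dv (ex 2) (fun p => AA B p 0) q
      - Dv (ex 0) (fun p => AA B p 2) q) = Dv et (fun q => B q 1) := by
    rw [curlA_1 hB]
  rw [Dv_sub (Dv_contDiff (hAs 0) (ex 2)) (Dv_contDiff (hAs 2) (ex 0))] at hDet
  funext q
  have h1 := congrFun hDet q
  have h2 := hFar1 q
  linarith

theorem c2V (hE : ContDiff ℝ (⊤ : ℕ∞) E) (hB : ContDiff ℝ (⊤ : ℕ∞) B)
    (hFar2 : ∀ q : SpaceTime, Dv (ex 0) (fun p => E p 1) q - Dv (ex 1) (fun p => E p 0) q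
      + Dv et (fun p => B p 2) q = 0)
    (hdiv : ∀ q : SpaceTime, Dv (ex 0) (fun p => B p 0) q + Dv (ex 1) (fun p => B p 1) q
      + Dv (ex 2) (fun p => B p 2) q = 0) :
    Dv (ex 0) (VV E B 1) = Dv (ex 1) (VV E B 0) := by
  rw [DV_V hE hB 0 1, DV_V hE hB 1 0]
  have hAs : ∀ j : Fin 3, ContDiff ℝ (⊤ : ℕ∞) (fun p => AA B p j) :=
    contDiff_pi.mp (AA_contDiff hB)
  have hDet : Dv et (fun q => Dv (ex 0) (fun p => AA B p 1) q
      - Dv (ex 1) (fun p => AA B p 0) q) = Dv et (fun q => B q 2) := by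
    rw [curlA_2 hB hdiv]
  rw [Dv_sub (Dv_contDiff (hAs 1) (ex 0)) (Dv_contDiff (hAs 0) (ex 1))] at hDet
  funext q
  have h1 := congrFun hDet q
  have h2 := hFar2 q
  linarith

end Scalar


section Grad

variable {E B : SpaceTime → (Fin 3 → ℝ)}

theorem Dv_PhiP (hE : ContDiff ℝ (⊤ : ℕ∞) E) (hB : ContDiff ℝ (⊤ : ℕ∞) B) (v : SpaceTime) :
    Dv v (PhiP E B) = fun p => (Dv v (Pc 2 (VV E B 2)) p + Dv v (Pc 1 (g1V E B)) p)
      + Dv v (Pc 0 (g0V E B)) p := by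
  show Dv v (fun p => (Pc 2 (VV E B 2) p + Pc 1 (g1V E B) p) + Pc 0 (g0V E B) p) = _
  rw [Dv_add ((Pc_contDiff 2 (VV_contDiff hE hB 2)).add (Pc_contDiff 1 (g1V_contDiff hE hB)))
    (Pc_contDiff 0 (g0V_contDiff hE hB)),
    Dv_add (Pc_contDiff 2 (VV_contDiff hE hB 2)) (Pc_contDiff 1 (g1V_contDiff hE hB))]

theorem Dv2_g1V (hE : ContDiff ℝ (⊤ : ℕ∞) E) (hB : ContDiff ℝ (⊤ : ℕ∞) B) :
    Dv (ex 2) (g1V E B) = fun _ => 0 := by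
  show Dv (ex 2) (fun q => VV E B 1 (q.1, Function.update q.2 2 0)) = _
  exact Dv_frozen_same 2 0 (VV_contDiff hE hB 1)

theorem Dv2_h0V (hE : ContDiff ℝ (⊤ : ℕ∞) E) (hB : ContDiff ℝ (⊤ : ℕ∞) B) :
    Dv (ex 2) (h0V E B) = fun _ => 0 := by
  show Dv (ex 2) (fun q => VV E B 0 (q.1, Function.update q.2 2 0)) = _
  exact Dv_frozen_same 2 0 (VV_contDiff hE hB 0)

theorem Dv2_g0V (hE : ContDiff ℝ (⊤ : ℕ∞) E) (hB : ContDiff ℝ (⊤ : ℕ∞) B) :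
    Dv (ex 2) (g0V E B) = fun _ => 0 := by
  show Dv (ex 2) (fun q => h0V E B (q.1, Function.update q.2 1 0)) = _
  rw [Dv_frozen_ne (show (2:Fin 3) ≠ 1 by decide) 0 (h0V_contDiff hE hB)]
  funext p
  rw [Dv2_h0V hE hB]

theorem Dv1_g0V (hE : ContDiff ℝ (⊤ : ℕ∞) E) (hB : ContDiff ℝ (⊤ : ℕ∞) B) :
    Dv (ex 1) (g0V E B) = fun _ => 0 := by
  show Dv (ex 1) (fun q => h0V E B (q.1, Function.update q.2 1 0)) = _
  exact Dv_frozen_same 1 0 (h0V_contDiff hE hB)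

/-- `∂₂ φ = V₂` -/
theorem grad2 (hE : ContDiff ℝ (⊤ : ℕ∞) E) (hB : ContDiff ℝ (⊤ : ℕ∞) B) :
    Dv (ex 2) (PhiP E B) = VV E B 2 := by
  rw [Dv_PhiP hE hB (ex 2), Dv_Pc_self 2 (VV_contDiff hE hB 2),
    Dv_Pc_ne (show (2:Fin 3) ≠ 1 by decide) (g1V_contDiff hE hB),
    Dv_Pc_ne (show (2:Fin 3) ≠ 0 by decide) (g0V_contDiff hE hB),
    Dv2_g1V hE hB, Dv2_g0V hE hB, Pc_zero, Pc_zero]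
  funext q
  simp

/-- `∂₁ φ = V₁` -/
theorem grad1 (hE : ContDiff ℝ (⊤ : ℕ∞) E) (hB : ContDiff ℝ (⊤ : ℕ∞) B)
    (hFar0 : ∀ q : SpaceTime, Dv (ex 1) (fun p => E p 2) q - Dv (ex 2) (fun p => E p 1) q
      + Dv et (fun p => B p 0) q = 0) :
    Dv (ex 1) (PhiP E B) = VV E B 1 := by
  rw [Dv_PhiP hE hB (ex 1),
    Dv_Pc_ne (show (1:Fin 3) ≠ 2 by decide) (VV_contDiff hE hB 2),
    Dv_Pc_self 1 (g1V_contDiff hE hB),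
    Dv_Pc_ne (show (1:Fin 3) ≠ 0 by decide) (g0V_contDiff hE hB),
    c0V hE hB hFar0, Dv1_g0V hE hB, Pc_zero]
  funext q
  have hftc := Pc_FTC 2 (VV_contDiff hE hB 1) q
  have hg1 : g1V E B q = VV E B 1 (q.1, Function.update q.2 2 0) := rfl
  simp only [hftc, hg1]
  ring

/-- `∂₀ φ = V₀` -/
theorem grad0 (hE : ContDiff ℝ (⊤ : ℕ∞) E) (hB : ContDiff ℝ (⊤ : ℕ∞) B)
    (hFar1 : ∀ q : SpaceTime, Dv (ex 2) (fun p => E p 0) q - Dv (ex 0) (fun p => E p 2) q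
      + Dv et (fun p => B p 1) q = 0)
    (hFar2 : ∀ q : SpaceTime, Dv (ex 0) (fun p => E p 1) q - Dv (ex 1) (fun p => E p 0) q
      + Dv et (fun p => B p 2) q = 0)
    (hdiv : ∀ q : SpaceTime, Dv (ex 0) (fun p => B p 0) q + Dv (ex 1) (fun p => B p 1) q
      + Dv (ex 2) (fun p => B p 2) q = 0) :
    Dv (ex 0) (PhiP E B) = VV E B 0 := by
  have hg0 : Dv (ex 0) (g1V E B) = Dv (ex 1) (h0V E B) := by
    show Dv (ex 0) (fun q => VV E B 1 (q.1, Function.update q.2 2 0)) =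
      Dv (ex 1) (fun q => VV E B 0 (q.1, Function.update q.2 2 0))
    rw [Dv_frozen_ne (show (0:Fin 3) ≠ 2 by decide) 0 (VV_contDiff hE hB 1),
      Dv_frozen_ne (show (1:Fin 3) ≠ 2 by decide) 0 (VV_contDiff hE hB 0),
      c2V hE hB hFar2 hdiv]
  rw [Dv_PhiP hE hB (ex 0),
    Dv_Pc_ne (show (0:Fin 3) ≠ 2 by decide) (VV_contDiff hE hB 2),
    Dv_Pc_ne (show (0:Fin 3) ≠ 1 by decide) (g1V_contDiff hE hB),
    Dv_Pc_self 0 (g0V_contDiff hE hB),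
    ← c1V hE hB hFar1, hg0]
  funext q
  have hftc2 := Pc_FTC 2 (VV_contDiff hE hB 0) q
  have hftc1 := Pc_FTC 1 (h0V_contDiff hE hB) q
  have hh0 : h0V E B q = VV E B 0 (q.1, Function.update q.2 2 0) := rfl
  have hg0q : g0V E B q = h0V E B (q.1, Function.update q.2 1 0) := rfl
  simp only [hftc2, hftc1, hh0, hg0q]
  ring

end Grad

end Faraday

open Faraday

/-- smooth fields satisfying Faraday's law on all of space-time
admit a smooth vector potential `A` and scalar potential `φ` with
`B = curl A` and `E = -∇φ - ∂ₜA`. -/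
theorem potential_of_faraday
    (E B : SpaceTime → (Fin 3 → ℝ))
    (hE : ContDiff ℝ (⊤ : ℕ∞) E) (hB : ContDiff ℝ (⊤ : ℕ∞) B)
    (hFaraday : ∀ (t : ℝ) (x : Fin 3 → ℝ) (j : Fin 3),
      curl3 E t x j + dt1 (fun p => B p j) t x = 0)
    (hdivB : ∀ (t : ℝ) (x : Fin 3 → ℝ), div3 B t x = 0) :
    ∃ (A : SpaceTime → (Fin 3 → ℝ)) (φ : SpaceTime → ℝ),
      ContDiff ℝ (⊤ : ℕ∞) A ∧ ContDiff ℝ (⊤ : ℕ∞) φ ∧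
      (∀ (t : ℝ) (x : Fin 3 → ℝ) (j : Fin 3), B (t, x) j = curl3 A t x j) ∧
      (∀ (t : ℝ) (x : Fin 3 → ℝ) (j : Fin 3),
        E (t, x) j = -grad3 φ t x j - dt1 (fun p => A p j) t x) := by
  have hEc : ∀ j : Fin 3, ContDiff ℝ (⊤ : ℕ∞) (fun p : SpaceTime => E p j) := contDiff_pi.mp hE
  have hBc : ∀ j : Fin 3, ContDiff ℝ (⊤ : ℕ∞) (fun p : SpaceTime => B p j) := contDiff_pi.mp hB
  have hAs : ∀ j : Fin 3, ContDiff ℝ (⊤ : ℕ∞) (fun p => AA B p j) :=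
    contDiff_pi.mp (AA_contDiff hB)
  have hdiv' : ∀ q : SpaceTime, Dv (ex 0) (fun p => B p 0) q + Dv (ex 1) (fun p => B p 1) q
      + Dv (ex 2) (fun p => B p 2) q = 0 := by
    intro q
    have h := hdivB q.1 q.2
    rw [div3, Fin.sum_univ_three, pd_eq_Dv (hBc 0) 0 q.1 q.2,
      pd_eq_Dv (hBc 1) 1 q.1 q.2, pd_eq_Dv (hBc 2) 2 q.1 q.2] at h
    simpa using h
  have hFar0 : ∀ q : SpaceTime, Dv (ex 1) (fun p => E p 2) q - Dv (ex 2) (fun p => E p 1) q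
      + Dv et (fun p => B p 0) q = 0 := by
    intro q
    have h := hFaraday q.1 q.2 0
    rw [curl3, show ((0:Fin 3)+1) = 1 from rfl, show ((0:Fin 3)+2) = 2 from rfl,
      pd_eq_Dv (hEc 2) 1 q.1 q.2, pd_eq_Dv (hEc 1) 2 q.1 q.2,
      dt1_eq_Dv (hBc 0) q.1 q.2] at h
    simpa using h
  have hFar1 : ∀ q : SpaceTime, Dv (ex 2) (fun p => E p 0) q - Dv (ex 0) (fun p => E p 2) q
      + Dv et (fun p => B p 1) q = 0 := by
    intro q
    have h := hFaraday q.1 q.2 1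
    rw [curl3, show ((1:Fin 3)+1) = 2 from rfl, show ((1:Fin 3)+2) = 0 from rfl,
      pd_eq_Dv (hEc 0) 2 q.1 q.2, pd_eq_Dv (hEc 2) 0 q.1 q.2,
      dt1_eq_Dv (hBc 1) q.1 q.2] at h
    simpa using h
  have hFar2 : ∀ q : SpaceTime, Dv (ex 0) (fun p => E p 1) q - Dv (ex 1) (fun p => E p 0) q
      + Dv et (fun p => B p 2) q = 0 := by
    intro q
    have h := hFaraday q.1 q.2 2
    rw [curl3, show ((2:Fin 3)+1) = 0 from rfl, show ((2:Fin 3)+2) = 1 from rfl,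
      pd_eq_Dv (hEc 1) 0 q.1 q.2, pd_eq_Dv (hEc 0) 1 q.1 q.2,
      dt1_eq_Dv (hBc 2) q.1 q.2] at h
    simpa using h
  have hgrad : ∀ j : Fin 3, Dv (ex j) (PhiP E B) = VV E B j := by
    intro j
    fin_cases j
    · exact grad0 hE hB hFar1 hFar2 hdiv'
    · exact grad1 hE hB hFar0
    · exact grad2 hE hB
  refine ⟨AA B, PhiP E B, AA_contDiff hB, PhiP_contDiff hE hB, ?_, ?_⟩
  · intro t x j
    fin_cases j
    · show B (t, x) 0 = pd 1 (fun y => AA B (t, y) 2) x - pd 2 (fun y => AA B (t, y) 1) x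
      rw [pd_eq_Dv (hAs 2) 1 t x, pd_eq_Dv (hAs 1) 2 t x]
      have hc := congrFun (curlA_0 hB) (t, x)
      linarith
    · show B (t, x) 1 = pd 2 (fun y => AA B (t, y) 0) x - pd 0 (fun y => AA B (t, y) 2) x
      rw [pd_eq_Dv (hAs 0) 2 t x, pd_eq_Dv (hAs 2) 0 t x]
      have hc := congrFun (curlA_1 hB) (t, x)
      linarith
    · show B (t, x) 2 = pd 0 (fun y => AA B (t, y) 1) x - pd 1 (fun y => AA B (t, y) 0) x
      rw [pd_eq_Dv (hAs 1) 0 t x, pd_eq_Dv (hAs 0) 1 t x]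
      have hc := congrFun (curlA_2 hB hdiv') (t, x)
      linarith
  · intro t x j
    rw [grad3, pd_eq_Dv (PhiP_contDiff hE hB) j t x, hgrad j,
      dt1_eq_Dv (hAs j) t x]
    show E (t, x) j = -(-E (t, x) j - Dv et (fun q => AA B q j) (t, x))
      - Dv et (fun p => AA B p j) (t, x)
    ring
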